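/- Suppose ρ̂₂ < ρ < 1 (which forces μ₁ < μ₂). Then the infimum of g(t,s) over (t,s) ∈ (0,∞)² equals 4μ₂ = g₂(1/μ₂), and this infimum is attained: g(t, 1/μ₂) = 4μ₂ for every t with w₁(1/μ₂) ≤ t ≤ f₁(1/μ₂). -/

import Mathlib

open Matrix

/-- The covariance matrix of `(X₁(t), X₂(s))`. -/
noncomputable def covM (ρ t s : ℝ) : Matrix (Fin 2) (Fin 2) ℝ :=
  !![t, ρ * min t s; ρ * min t s, s]

/-- The quadratic form `(x,y) Σ_{ts}⁻¹ (x,y)ᵀ`. -/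
noncomputable def quadF (ρ t s x y : ℝ) : ℝ :=
  dotProduct ![x, y] ((covM ρ t s)⁻¹.mulVec ![x, y])

/-- `g(t,s) = inf{ (x,y) Σ_{ts}⁻¹ (x,y)ᵀ : x ≥ 1+μ₁t, y ≥ 1+μ₂s }`. -/
noncomputable def gFun (μ₁ μ₂ ρ t s : ℝ) : ℝ :=
  sInf { q : ℝ | ∃ x y : ℝ, 1 + μ₁ * t ≤ x ∧ 1 + μ₂ * s ≤ y ∧ q = quadF ρ t s x y }

/-- `g₃(t,s)`: the quadratic form at the corner point `(1+μ₁t, 1+μ₂s)`. -/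
noncomputable def g3Fun (μ₁ μ₂ ρ t s : ℝ) : ℝ :=
  quadF ρ t s (1 + μ₁ * t) (1 + μ₂ * s)

/-- `g₂(s) = (1+μ₂s)²/s`. -/
noncomputable def g2Fun (μ₂ s : ℝ) : ℝ := (1 + μ₂ * s) ^ 2 / s

/-- `f₁(s) = (ρ−1)/μ₁ + (ρμ₂/μ₁)s`. -/
noncomputable def f1Fun (μ₁ μ₂ ρ s : ℝ) : ℝ := (ρ - 1) / μ₁ + ρ * μ₂ / μ₁ * s

/-- `w₁(s) = s/(ρ + (ρμ₂−μ₁)s)`. -/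
noncomputable def w1Fun (μ₁ μ₂ ρ s : ℝ) : ℝ := s / (ρ + (ρ * μ₂ - μ₁) * s)

lemma quadF_eq (ρ t s x y : ℝ) (hD : t*s - (ρ*min t s)*(ρ*min t s) ≠ 0) :
    quadF ρ t s x y =
      (s*x^2 - 2*(ρ*min t s)*x*y + t*y^2)/(t*s - (ρ*min t s)*(ρ*min t s)) := by
  unfold quadF covM
  rw [Matrix.inv_def]
  simp [Matrix.det_fin_two_of, Matrix.adjugate_fin_two_of, Ring.inverse_eq_inv',
    Matrix.mulVec, dotProduct, Fin.sum_univ_two]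
  field_simp
  ring

lemma detPos (ρ t s : ℝ) (ht : 0 < t) (hs : 0 < s) (h1 : -1 < ρ) (h2 : ρ < 1) :
    0 < t*s - (ρ*min t s)*(ρ*min t s) := by
  have hm : 0 < min t s := lt_min ht hs
  have h3 : min t s ≤ t := min_le_left t s
  have h4 : min t s ≤ s := min_le_right t s
  have hρ2 : ρ^2 < 1 := by nlinarith
  have hmm : min t s * min t s ≤ t*s := mul_le_mul h3 h4 hm.le ht.le
  nlinarith [mul_pos hm hm]

lemma quadF_decomp (ρ t s x y : ℝ) (ht : 0 < t) (hs : 0 < s) (h1 : -1 < ρ) (h2 : ρ < 1) :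
    quadF ρ t s x y =
      (s*x - (ρ*min t s)*y)^2 / (s*(t*s - (ρ*min t s)*(ρ*min t s))) + y^2/s := by
  have hD := detPos ρ t s ht hs h1 h2
  rw [quadF_eq ρ t s x y hD.ne']
  rw [div_add_div _ _ (mul_pos hs hD).ne' hs.ne', div_eq_div_iff hD.ne' (by positivity)]
  ring

lemma quadF_lb (ρ t s x y : ℝ) (ht : 0 < t) (hs : 0 < s) (h1 : -1 < ρ) (h2 : ρ < 1) :
    y^2/s ≤ quadF ρ t s x y := by
  rw [quadF_decomp ρ t s x y ht hs h1 h2]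
  have hD := detPos ρ t s ht hs h1 h2
  have : 0 ≤ (s*x - (ρ*min t s)*y)^2 / (s*(t*s - (ρ*min t s)*(ρ*min t s))) := by positivity
  linarith

lemma gFun_ge (μ₁ μ₂ ρ t s : ℝ) (hμ2 : 0 < μ₂) (ht : 0 < t) (hs : 0 < s)
    (h1 : -1 < ρ) (h2 : ρ < 1) : 4*μ₂ ≤ gFun μ₁ μ₂ ρ t s := by
  have hne : { q : ℝ | ∃ x y : ℝ, 1 + μ₁ * t ≤ x ∧ 1 + μ₂ * s ≤ y ∧ q = quadF ρ t s x y }.Nonempty :=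
    ⟨quadF ρ t s (1+μ₁*t) (1+μ₂*s), 1+μ₁*t, 1+μ₂*s, le_refl _, le_refl _, rfl⟩
  apply le_csInf hne
  rintro q ⟨x, y, hx, hy, rfl⟩
  have hb : 0 < 1 + μ₂*s := by positivity
  have h3 : (1+μ₂*s)^2/s ≤ y^2/s := by
    gcongr
  have h4 : 4*μ₂ ≤ (1+μ₂*s)^2/s := by
    rw [le_div_iff₀ hs]; nlinarith [sq_nonneg (1-μ₂*s)]
  have h5 := quadF_lb ρ t s x y ht hs h1 h2
  linarith

lemma gFun_le (μ₁ μ₂ ρ t s : ℝ) (ht : 0 < t) (hs : 0 < s) (h1 : -1 < ρ) (h2 : ρ < 1)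
    (hcond : (1 + μ₁*t) * s ≤ (ρ * min t s) * (1 + μ₂*s)) :
    gFun μ₁ μ₂ ρ t s ≤ (1+μ₂*s)^2/s := by
  have hbdd : BddBelow { q : ℝ | ∃ x y : ℝ, 1 + μ₁ * t ≤ x ∧ 1 + μ₂ * s ≤ y ∧ q = quadF ρ t s x y } := by
    refine ⟨0, ?_⟩
    rintro q ⟨x, y, hx, hy, rfl⟩
    have : (0:ℝ) ≤ y^2/s := by positivity
    linarith [quadF_lb ρ t s x y ht hs h1 h2]
  have hmem : quadF ρ t s ((ρ * min t s) * (1 + μ₂*s) / s) (1 + μ₂*s) ∈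
      { q : ℝ | ∃ x y : ℝ, 1 + μ₁ * t ≤ x ∧ 1 + μ₂ * s ≤ y ∧ q = quadF ρ t s x y } := by
    refine ⟨(ρ * min t s) * (1 + μ₂*s) / s, 1 + μ₂*s, ?_, le_refl _, rfl⟩
    rw [le_div_iff₀ hs]
    exact hcond
  have hval : quadF ρ t s ((ρ * min t s) * (1 + μ₂*s) / s) (1 + μ₂*s) = (1+μ₂*s)^2/s := by
    rw [quadF_decomp _ _ _ _ _ ht hs h1 h2]
    have hz : s * ((ρ * min t s) * (1 + μ₂*s) / s) - (ρ*min t s)*(1+μ₂*s) = 0 := by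
      field_simp
      ring
    rw [hz]
    simp
  calc gFun μ₁ μ₂ ρ t s ≤ quadF ρ t s ((ρ * min t s) * (1 + μ₂*s) / s) (1 + μ₂*s) :=
        csInf_le hbdd hmem
    _ = (1+μ₂*s)^2/s := hval

lemma gFun_attain (μ₁ μ₂ ρ : ℝ) (hμ1 : 0 < μ₁) (hμ12 : μ₁ ≤ μ₂)
    (hρl : -1 < ρ) (hρu : ρ < 1) (hρ2 : (μ₁ + μ₂) / (2 * μ₂) < ρ)
    (t : ℝ) (hwt : w1Fun μ₁ μ₂ ρ (1 / μ₂) ≤ t) (htf : t ≤ f1Fun μ₁ μ₂ ρ (1 / μ₂)) :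
    gFun μ₁ μ₂ ρ t (1 / μ₂) = 4 * μ₂ := by
  have hμ2 : 0 < μ₂ := lt_of_lt_of_le hμ1 hμ12
  have hρ2' : μ₁ + μ₂ < 2 * ρ * μ₂ := by
    rw [div_lt_iff₀ (by positivity)] at hρ2
    nlinarith
  have hd : 0 < 2*ρ*μ₂ - μ₁ := by nlinarith
  have hs : (0:ℝ) < 1/μ₂ := by positivity
  have hw : w1Fun μ₁ μ₂ ρ (1/μ₂) = 1/(2*ρ*μ₂ - μ₁) := by
    unfold w1Fun
    rw [show ρ + (ρ * μ₂ - μ₁) * (1/μ₂) = (2*ρ*μ₂-μ₁)/μ₂ by field_simp; ring]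
    rw [div_div_div_eq, one_mul, div_mul_cancel_left₀ hμ2.ne', one_div]
  have hf : f1Fun μ₁ μ₂ ρ (1/μ₂) = (2*ρ-1)/μ₁ := by
    unfold f1Fun
    field_simp
    ring
  have ht : 0 < t := lt_of_lt_of_le (by rw [hw]; positivity) hwt
  have hcond : (1 + μ₁*t) * (1/μ₂) ≤ (ρ * min t (1/μ₂)) * (1 + μ₂*(1/μ₂)) := by
    have h2 : μ₂*(1/μ₂) = 1 := by field_simp
    rw [h2]
    rcases le_total t (1/μ₂) with h | h
    · rw [min_eq_left h]
      rw [hw, div_le_iff₀ hd] at hwt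
      rw [mul_one_div, div_le_iff₀ hμ2]
      nlinarith
    · rw [min_eq_right h]
      rw [hf, le_div_iff₀ hμ1] at htf
      rw [mul_one_div, div_le_iff₀ hμ2]
      rw [mul_one_div]
      rw [div_mul_eq_mul_div, div_mul_eq_mul_div, le_div_iff₀ hμ2]
      nlinarith
  have hle := gFun_le μ₁ μ₂ ρ t (1/μ₂) ht hs hρl hρu hcond
  have hge := gFun_ge μ₁ μ₂ ρ t (1/μ₂) hμ2 ht hs hρl hρu
  have hv : (1+μ₂*(1/μ₂))^2/(1/μ₂) = 4*μ₂ := by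
    rw [mul_one_div, div_self hμ2.ne', one_div, div_eq_mul_inv, inv_inv]
    ring
  rw [hv] at hle
  linarith

theorem stmt7 (μ₁ μ₂ ρ : ℝ) (hμ1 : 0 < μ₁) (hμ12 : μ₁ ≤ μ₂)
    (hρl : -1 < ρ) (hρu : ρ < 1) (hρ2 : (μ₁ + μ₂) / (2 * μ₂) < ρ) :
    IsLeast { v : ℝ | ∃ t s : ℝ, 0 < t ∧ 0 < s ∧ v = gFun μ₁ μ₂ ρ t s } (4 * μ₂) ∧
    g2Fun μ₂ (1 / μ₂) = 4 * μ₂ ∧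
    (∀ t : ℝ, w1Fun μ₁ μ₂ ρ (1 / μ₂) ≤ t → t ≤ f1Fun μ₁ μ₂ ρ (1 / μ₂) →
      gFun μ₁ μ₂ ρ t (1 / μ₂) = 4 * μ₂) := by
  have hμ2 : 0 < μ₂ := lt_of_lt_of_le hμ1 hμ12
  have hρ2' : μ₁ + μ₂ < 2 * ρ * μ₂ := by
    rw [div_lt_iff₀ (by positivity)] at hρ2
    nlinarith
  have hd : 0 < 2*ρ*μ₂ - μ₁ := by nlinarith
  have hw : w1Fun μ₁ μ₂ ρ (1/μ₂) = 1/(2*ρ*μ₂ - μ₁) := by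
    unfold w1Fun
    rw [show ρ + (ρ * μ₂ - μ₁) * (1/μ₂) = (2*ρ*μ₂-μ₁)/μ₂ by field_simp; ring]
    rw [div_div_div_eq, one_mul, div_mul_cancel_left₀ hμ2.ne', one_div]
  have hf : f1Fun μ₁ μ₂ ρ (1/μ₂) = (2*ρ-1)/μ₁ := by
    unfold f1Fun
    field_simp
    ring
  refine ⟨⟨⟨1/μ₂, 1/μ₂, by positivity, by positivity, ?_⟩, ?_⟩, ?_, ?_⟩
  · rw [gFun_attain μ₁ μ₂ ρ hμ1 hμ12 hρl hρu hρ2 (1/μ₂) ?_ ?_]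
    · rw [hw]
      apply one_div_le_one_div_of_le hμ2
      linarith
    · rw [hf, div_le_div_iff₀ hμ2 hμ1]
      nlinarith
  · rintro v ⟨t, s, ht, hs, rfl⟩
    exact gFun_ge μ₁ μ₂ ρ t s hμ2 ht hs hρl hρu
  · unfold g2Fun
    rw [mul_one_div, div_self hμ2.ne', one_div, div_eq_mul_inv, inv_inv]
    ring
  · exact gFun_attain μ₁ μ₂ ρ hμ1 hμ12 hρl hρu hρ2
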